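/- arXiv:2312.16618 — 2 statements merged into one kernel-verified Lean document; each statement's English description precedes it below -/
import Mathlib

section
/- Let G be a cofinitary group and (s,E) a condition of Zhang's forcing Z_G. Then: (1) if n ∉ dom(s), then for all but finitely many m ∈ ℕ the pair (s ∪ {(n,m)}, E) is a condition of Z_G extending (s,E); (2) if m ∉ ran(s), then for all but finitely many n ∈ ℕ the pair (s ∪ {(n,m)}, E) is a condition of Z_G extending (s,E). -/
noncomputable section

/-- Permutations of the natural numbers (elements of `S_∞`). -/
abbrev Perm' := Equiv.Perm ℕ

/-- A letter of a word over `G ∪ {x, x⁻¹}`: either a group element (of `S_∞`),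
or `Sum.inr true` standing for `x`, or `Sum.inr false` standing for `x⁻¹`. -/
abbrev Letter := Perm' ⊕ Bool

/-- A word is a list of letters, written left to right
(the leftmost letter is applied last). -/
abbrev Word := List Letter

/-- A subgroup of `S_∞` is cofinitary if every non-identity element
has only finitely many fixed points. -/
def Cofinitary (G : Subgroup Perm') : Prop :=
  ∀ g ∈ G, g ≠ 1 → {n : ℕ | g n = n}.Finite

/-- A set of pairs is a partial injection (functional and injective). -/
def PartInj (s : Set (ℕ × ℕ)) : Prop :=
  (∀ ⦃a b c⦄, (a, b) ∈ s → (a, c) ∈ s → b = c) ∧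
  (∀ ⦃a b c⦄, (a, c) ∈ s → (b, c) ∈ s → a = b)

/-- Domain of a partial injection given as a set of pairs. -/
def pdom (s : Set (ℕ × ℕ)) : Set ℕ := Prod.fst '' s

/-- Range of a partial injection given as a set of pairs. -/
def pran (s : Set (ℕ × ℕ)) : Set ℕ := Prod.snd '' s

/-- The relation given by substituting the partial injection `s` for `x`
(and `s⁻¹` for `x⁻¹`) in a single letter. -/
def letterRel (s : Set (ℕ × ℕ)) : Letter → ℕ → ℕ → Prop
  | Sum.inl g => fun a b => g a = b
  | Sum.inr true => fun a b => (a, b) ∈ s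
  | Sum.inr false => fun a b => (b, a) ∈ s

/-- The relation `w[s]`: evaluation of a word at the partial injection `s`,
composing the letter relations (rightmost letter applied first). -/
def wordRel (s : Set (ℕ × ℕ)) : Word → ℕ → ℕ → Prop
  | [] => fun a b => a = b
  | l :: w => fun a b => ∃ c, wordRel s w a c ∧ letterRel s l c b

/-- `fix(w[s])`, the set of fixed points of the partial injection `w[s]`. -/
def wordFix (s : Set (ℕ × ℕ)) (w : Word) : Set ℕ := {n | wordRel s w n n}

/-- The word `x^k` for an integer `k` (for `k < 0`, `|k|` copies of `x⁻¹`). -/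
def xpow (k : ℤ) : Word :=
  if 0 ≤ k then List.replicate k.toNat (Sum.inr true : Letter)
  else List.replicate (-k).toNat (Sum.inr false : Letter)

/-- The block `g x^k` as a word. -/
def blockWord (p : Perm' × ℤ) : Word := Sum.inl p.1 :: xpow p.2

/-- `w` is a nice word (member of `W*_G`): `w = x^{k₀}` with `k₀ > 0`, or
`w = g_l x^{k_l} ⋯ g₁ x^{k₁} g₀ x^{k₀}` with `k₀ > 0`, all `k_i ≠ 0` and all
`g_i ∈ G \ {id}`. -/
def IsNice (G : Subgroup Perm') (w : Word) : Prop :=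
  (∃ k : ℕ, 0 < k ∧ w = xpow (k : ℤ)) ∨
  (∃ bs : List (Perm' × ℤ), bs ≠ [] ∧
    (∀ p ∈ bs, p.1 ∈ G ∧ p.1 ≠ 1 ∧ p.2 ≠ 0) ∧
    (∃ p, bs.getLast? = some p ∧ 0 < p.2) ∧
    w = (bs.map blockWord).flatten)

/-- The number of occurrences of `x` or `x⁻¹` in a word. -/
def xOccurrences (w : Word) : ℕ := w.countP (fun l => l.isRight)

/-- `w ∈ W¹_G`: a nice word with exactly one occurrence of `x` or `x⁻¹`. -/
def IsNiceOne (G : Subgroup Perm') (w : Word) : Prop :=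
  IsNice G w ∧ xOccurrences w = 1

/-- `(s, E)` is a condition of Zhang's forcing `Z_G`: `s` is a finite partial
injection and `E` a finite set of nice words. -/
def ZCond (G : Subgroup Perm') (s : Set (ℕ × ℕ)) (E : Set Word) : Prop :=
  s.Finite ∧ PartInj s ∧ E.Finite ∧ ∀ w ∈ E, IsNice G w

/-- `(t, F) ≤ (s, E)` in Zhang's forcing: `s ⊆ t`, `E ⊆ F`, and
`fix(w[t]) = fix(w[s])` for every `w ∈ E`. -/
def ZLe (t : Set (ℕ × ℕ)) (F : Set Word) (s : Set (ℕ × ℕ)) (E : Set Word) : Prop :=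
  s ⊆ t ∧ E ⊆ F ∧ ∀ w ∈ E, wordFix t w = wordFix s w

/-- An injective tree: a nonempty set of finite sequences closed under initial
segments, all of whose elements are injective sequences. -/
def IsInjTree (T : Set (List ℕ)) : Prop :=
  T.Nonempty ∧ (∀ t ∈ T, ∀ s : List ℕ, s <+: t → s ∈ T) ∧ ∀ t ∈ T, t.Nodup

/-- `T ∈ I_i(P)⁺`: an injective tree such that for every `s ∈ T` and every
finite `P₀ ⊆ P` there are `t ∈ T` extending `s` and `k ∈ dom(t) \ dom(s)` with
`t(k) ≠ f(k)` for all `f ∈ P₀`. -/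
def TreePos (P : Set Perm') (T : Set (List ℕ)) : Prop :=
  IsInjTree T ∧
  ∀ s ∈ T, ∀ P₀ ⊆ P, P₀.Finite →
    ∃ t ∈ T, s <+: t ∧ ∃ k, s.length ≤ k ∧ k < t.length ∧
      ∀ f ∈ P₀, t.getD k 0 ≠ f k

/-- A set `O` is closed under a relation `R` and its inverse. -/
def RelClosed (R : ℕ → ℕ → Prop) (O : Set ℕ) : Prop :=
  ∀ a b, R a b → (a ∈ O ↔ b ∈ O)

/-- The orbit of `n` under the (partial injective) relation `R`: the smallest
set containing `n` closed under applications of `R` and `R⁻¹`. -/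
def relOrbit (R : ℕ → ℕ → Prop) (n : ℕ) : Set ℕ :=
  ⋂₀ {O : Set ℕ | n ∈ O ∧ RelClosed R O}

/-- The set of all orbits of the relation `R`. -/
def relOrbits (R : ℕ → ℕ → Prop) : Set (Set ℕ) := {O | ∃ n, O = relOrbit R n}

/-- Domain of a relation. -/
def relDom (R : ℕ → ℕ → Prop) : Set ℕ := {a | ∃ b, R a b}

/-- Range of a relation. -/
def relRan (R : ℕ → ℕ → Prop) : Set ℕ := {b | ∃ a, R a b}

/-- The set of closed orbits of `R`: those orbits contained in `dom ∩ ran`. -/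
def relClosedOrbits (R : ℕ → ℕ → Prop) : Set (Set ℕ) :=
  {O ∈ relOrbits R | O ⊆ relDom R ∩ relRan R}

/-- The relation of a partial injection given as a set of pairs. -/
def sRel (s : Set (ℕ × ℕ)) : ℕ → ℕ → Prop := fun a b => (a, b) ∈ s

/-- The relation (graph) of a permutation of `ℕ`. -/
def permRel (f : Perm') : ℕ → ℕ → Prop := fun a b => f a = b

/-- A partial injection `s` is nice: every closed orbit has its minimum below
the minimum of the complement of the union of all closed orbits. -/
def NiceInj (s : Set (ℕ × ℕ)) : Prop :=
  ∀ O ∈ relClosedOrbits (sRel s),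
    sInf O < sInf {n : ℕ | n ∉ ⋃₀ relClosedOrbits (sRel s)}

/-- The position of a closed orbit `O` of `s` in the well-order of closed
orbits by their minima. -/
def orbitIndex (s : Set (ℕ × ℕ)) (O : Set ℕ) : ℕ :=
  {P ∈ relClosedOrbits (sRel s) | sInf P < sInf O}.ncard

/-- `s` codes `r`, i.e. `o_s ⊆ r`: the `n`-th closed orbit (in the well-order
by minima) has cardinality congruent to `r(n)` mod 2. -/
def CodesReal (s : Set (ℕ × ℕ)) (r : ℕ → Fin 2) : Prop :=
  ∀ O ∈ relClosedOrbits (sRel s), O.ncard % 2 = (r (orbitIndex s O) : ℕ)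

/-- `(s, E)` is a condition of `Z_G(r)`. -/
def ZrCond (G : Subgroup Perm') (r : ℕ → Fin 2)
    (s : Set (ℕ × ℕ)) (E : Set Word) : Prop :=
  ZCond G s E ∧ NiceInj s ∧ CodesReal s r

/-- The `n`-th prime. -/
def pPrime (n : ℕ) : ℕ := Nat.nth Nat.Prime n

/-- The orbit-coding function `o†`: `o†(n)` is the number of closed orbits of
`R` of cardinality `p_n`, modulo 2. -/
def odag (R : ℕ → ℕ → Prop) (n : ℕ) : ℕ :=
  {O ∈ relClosedOrbits R | O.ncard = pPrime n}.ncard % 2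

/-- `v^k`: the word `v` concatenated `k` times. -/
def wpow (v : Word) (k : ℕ) : Word := (List.replicate k v).flatten

/-- `w ∈ W†_G`: a nice word that is indecomposable, i.e. not of the form `v^k`
for a nice word `v` and `k > 1`. -/
def Indecomposable (G : Subgroup Perm') (w : Word) : Prop :=
  IsNice G w ∧ ¬∃ v : Word, IsNice G v ∧ ∃ k : ℕ, 1 < k ∧ w = wpow v k

/-- The inverse of a letter. -/
def letterInv : Letter → Letter
  | Sum.inl g => Sum.inl g⁻¹
  | Sum.inr b => Sum.inr (!b)

/-- The inverse of a word. -/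
def wordInv (w : Word) : Word := (w.map letterInv).reverse

/-- `E` is closed under cyclic permutations and inverses thereof within `W*_G`. -/
def CyclClosed (G : Subgroup Perm') (E : Set Word) : Prop :=
  ∀ w ∈ E, ∀ w₀ w₁ : Word, w = w₀ ++ w₁ →
    (IsNice G (w₁ ++ w₀) → w₁ ++ w₀ ∈ E) ∧
    (IsNice G (wordInv (w₁ ++ w₀)) → wordInv (w₁ ++ w₀) ∈ E)

/-- `(s, E)` is a condition of `Z†_G(r)`: a Zhang condition such that `E` is
closed under cyclic permutations and inverses thereof in `W*_G`, and whenever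
`w = v^k ∈ E` with `v ∈ W†_G` then `v^l ∈ E` for all `0 < l ≤ k` and `o†_{v[s]}`
codes `r` up to `n` for every `n` with `p_n ≤ k`. -/
def ZdagCond (G : Subgroup Perm') (r : ℕ → Fin 2)
    (s : Set (ℕ × ℕ)) (E : Set Word) : Prop :=
  ZCond G s E ∧ CyclClosed G E ∧
  ∀ w ∈ E, ∀ v : Word, ∀ k : ℕ, Indecomposable G v → w = wpow v k →
    (∀ l : ℕ, 0 < l → l ≤ k → wpow v l ∈ E) ∧
    (∀ n : ℕ, pPrime n ≤ k → ∀ i ≤ n, odag (wordRel s v) i = (r i : ℕ))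

/-- Substituting the permutation `f` for `x` in a letter. -/
def letterPerm (f : Perm') : Letter → Perm'
  | Sum.inl g => g
  | Sum.inr true => f
  | Sum.inr false => f⁻¹

/-- `w[f]`: evaluation of a word at the permutation `f`. -/
def wordPerm (f : Perm') (w : Word) : Perm' := (w.map (letterPerm f)).prod

/-- Two functions are eventually different. -/
def EvDiff (f g : ℕ → ℕ) : Prop := {k : ℕ | f k = g k}.Finite

/-- A set of permutations is an eventually different family. -/
def EDFamily (P : Set Perm') : Prop :=
  ∀ f ∈ P, ∀ g ∈ P, f ≠ g → EvDiff f g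


/-! ### Auxiliary development for `statement1` -/

/-- Adjacency condition satisfied by consecutive letters of a nice word:
no `x x⁻¹` or `x⁻¹ x` cancellation and no two adjacent group letters. -/
def adj : Letter → Letter → Prop
  | Sum.inr b, Sum.inr b' => b = b'
  | Sum.inl _, Sum.inl _ => False
  | _, _ => True

@[simp] lemma adj_inr_inr {b b' : Bool} : adj (Sum.inr b) (Sum.inr b') ↔ b = b' := Iff.rfl
@[simp] lemma adj_inl_inl {g h : Perm'} : ¬ adj (Sum.inl g) (Sum.inl h) := id
@[simp] lemma adj_inl_inr {g : Perm'} {b : Bool} : adj (Sum.inl g) (Sum.inr b) := trivial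
@[simp] lemma adj_inr_inl {g : Perm'} {b : Bool} : adj (Sum.inr b) (Sum.inl g) := trivial

lemma adj_symm : ∀ {x y : Letter}, adj x y → adj y x := by
  rintro (g | b) (g' | b') h <;> first | exact h.symm | trivial | exact h

@[simp] lemma letterRel_inl {s : Set (ℕ × ℕ)} {g : Perm'} {a b : ℕ} :
    letterRel s (Sum.inl g) a b ↔ g a = b := Iff.rfl
@[simp] lemma letterRel_true {s : Set (ℕ × ℕ)} {a b : ℕ} :
    letterRel s (Sum.inr true) a b ↔ (a, b) ∈ s := Iff.rfl
@[simp] lemma letterRel_false {s : Set (ℕ × ℕ)} {a b : ℕ} :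
    letterRel s (Sum.inr false) a b ↔ (b, a) ∈ s := Iff.rfl

/-- Evaluation of a word with the head letter applied *first*. -/
def chainRel (s : Set (ℕ × ℕ)) : Word → ℕ → ℕ → Prop
  | [] => fun a b => a = b
  | l :: v => fun a b => ∃ c, letterRel s l a c ∧ chainRel s v c b

@[simp] lemma chainRel_nil {s : Set (ℕ × ℕ)} {a b : ℕ} : chainRel s [] a b ↔ a = b := Iff.rfl
@[simp] lemma chainRel_cons {s : Set (ℕ × ℕ)} {l : Letter} {v : Word} {a b : ℕ} :
    chainRel s (l :: v) a b ↔ ∃ c, letterRel s l a c ∧ chainRel s v c b := Iff.rfl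

lemma chainRel_append {s : Set (ℕ × ℕ)} {u v : Word} {a b : ℕ} :
    chainRel s (u ++ v) a b ↔ ∃ c, chainRel s u a c ∧ chainRel s v c b := by
  induction u generalizing a with
  | nil => simp
  | cons l u ih =>
    simp only [List.cons_append, chainRel_cons, ih, chainRel_nil]
    tauto

lemma wordRel_iff_chainRel {s : Set (ℕ × ℕ)} {w : Word} {a b : ℕ} :
    wordRel s w a b ↔ chainRel s w.reverse a b := by
  induction w generalizing b with
  | nil => simp [wordRel]
  | cons l w ih =>
    show (∃ c, wordRel s w a c ∧ letterRel s l c b) ↔ _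
    simp only [List.reverse_cons, chainRel_append, ih, chainRel_cons, chainRel_nil]
    constructor
    · rintro ⟨c, h1, h2⟩; exact ⟨c, h1, b, h2, rfl⟩
    · rintro ⟨c, h1, d, h2, rfl⟩; exact ⟨c, h1, h2⟩

lemma letterRel_mono {s t : Set (ℕ × ℕ)} (h : s ⊆ t) {l : Letter} {a b : ℕ} :
    letterRel s l a b → letterRel t l a b := by
  rcases l with g | (_ | _)
  · exact id
  · exact fun hh => h hh
  · exact fun hh => h hh

lemma chainRel_mono {s t : Set (ℕ × ℕ)} (h : s ⊆ t) :
    ∀ {v : Word} {a b : ℕ}, chainRel s v a b → chainRel t v a b := by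
  intro v
  induction v with
  | nil => exact fun hh => hh
  | cons l v ih =>
    rintro a b ⟨c, h1, h2⟩
    exact ⟨c, letterRel_mono h h1, ih h2⟩

lemma mem_pdom {s : Set (ℕ × ℕ)} {a b : ℕ} (h : (a, b) ∈ s) : a ∈ pdom s := ⟨(a, b), h, rfl⟩
lemma mem_pran {s : Set (ℕ × ℕ)} {a b : ℕ} (h : (a, b) ∈ s) : b ∈ pran s := ⟨(a, b), h, rfl⟩

lemma pair_eq {a b c d : ℕ} (h : (a, b) = (c, d)) : a = c ∧ b = d := by
  simpa [Prod.ext_iff] using h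

lemma xpow_pos {k : ℤ} (hk : 0 ≤ k) : xpow k = List.replicate k.toNat (Sum.inr true : Letter) := by
  simp [xpow, hk]

lemma xpow_repl (k : ℤ) :
    ∃ j b, xpow k = List.replicate j (Sum.inr b : Letter) ∧ (k ≠ 0 → 0 < j) := by
  unfold xpow
  split_ifs with h
  · exact ⟨k.toNat, true, rfl, by omega⟩
  · exact ⟨(-k).toNat, false, rfl, by omega⟩

lemma chain'_adj_replicate (j : ℕ) (b : Bool) :
    List.Chain' adj (List.replicate j (Sum.inr b : Letter)) := by
  induction j with
  | zero => simp [List.Chain']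
  | succ j ih =>
    rw [List.replicate_succ, List.Chain', List.isChain_cons]
    refine ⟨fun y hy => ?_, ih⟩
    have := List.eq_of_mem_replicate (List.mem_of_mem_head? hy)
    subst this
    rfl

lemma blockWord_ne_nil (p : Perm' × ℤ) : blockWord p ≠ [] := by simp [blockWord]

lemma chain'_blockWord (p : Perm' × ℤ) : List.Chain' adj (blockWord p) := by
  obtain ⟨j, b, hx, -⟩ := xpow_repl p.2
  rw [blockWord, hx, List.Chain', List.isChain_cons]
  refine ⟨fun y hy => ?_, chain'_adj_replicate j b⟩
  have := List.eq_of_mem_replicate (List.mem_of_mem_head? hy)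
  subst this
  trivial

lemma getLast?_blockWord {p : Perm' × ℤ} (hp : 0 < p.2) :
    (blockWord p).getLast? = some (Sum.inr true : Letter) := by
  rw [blockWord, xpow_pos hp.le,
    show (Sum.inl p.1 :: List.replicate p.2.toNat (Sum.inr true) : Word)
      = [Sum.inl p.1] ++ List.replicate p.2.toNat (Sum.inr true) from rfl,
    List.getLast?_append, List.getLast?_replicate]
  have : p.2.toNat ≠ 0 := by omega
  simp [this]

lemma getLast?_blockWord' {p : Perm' × ℤ} (hp : p.2 ≠ 0) :
    ∃ b : Bool, (blockWord p).getLast? = some (Sum.inr b : Letter) := by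
  obtain ⟨j, b, hx, hj⟩ := xpow_repl p.2
  refine ⟨b, ?_⟩
  rw [blockWord, hx,
    show (Sum.inl p.1 :: List.replicate j (Sum.inr b) : Word)
      = [Sum.inl p.1] ++ List.replicate j (Sum.inr b) from rfl,
    List.getLast?_append, List.getLast?_replicate]
  have : j ≠ 0 := by have := hj hp; omega
  simp [this]

lemma blocks_head (p : Perm' × ℤ) (rest : List (Perm' × ℤ)) :
    (((p :: rest).map blockWord).flatten).head? = some (Sum.inl p.1) := by
  simp [List.flatten_cons, blockWord]

lemma blocks_getLast : ∀ (bs : List (Perm' × ℤ)) (p : Perm' × ℤ), bs.getLast? = some p →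
    ((bs.map blockWord).flatten).getLast? = (blockWord p).getLast? := by
  intro bs
  induction bs with
  | nil => intro p h; simp at h
  | cons q rest ih =>
    intro p h
    cases rest with
    | nil =>
      simp only [List.getLast?_singleton, Option.some_inj] at h
      subst h
      simp [List.flatten_cons]
    | cons q' rest' =>
      rw [List.getLast?_cons_cons] at h
      have h1 : (((q' :: rest').map blockWord).flatten).getLast? = (blockWord p).getLast? :=
        ih p h
      rw [List.map_cons, List.flatten_cons, List.getLast?_append, h1]
      have h2 : ((blockWord p).getLast?).isSome := by
        rw [List.getLast?_isSome]
        exact blockWord_ne_nil p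
      exact Option.or_of_isSome h2

lemma blocks_chain : ∀ (bs : List (Perm' × ℤ)), (∀ p ∈ bs, p.2 ≠ 0) →
    List.Chain' adj ((bs.map blockWord).flatten) := by
  intro bs
  induction bs with
  | nil => intro _; simp [List.Chain']
  | cons q rest ih =>
    intro hbs
    rw [List.map_cons, List.flatten_cons, List.Chain', List.isChain_append]
    refine ⟨chain'_blockWord q, ih (fun p hp => hbs p (List.mem_cons_of_mem _ hp)), ?_⟩
    intro x hx y hy
    cases rest with
    | nil => simp at hy
    | cons q' rest' =>
      rw [blocks_head] at hy
      simp only [Option.mem_def, Option.some_inj] at hy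
      subst hy
      obtain ⟨b, hb⟩ := getLast?_blockWord' (hbs q (List.mem_cons_self))
      rw [hb] at hx
      simp only [Option.mem_def, Option.some_inj] at hx
      subst hx
      trivial

lemma nice_facts {G : Subgroup Perm'} {w : Word} (hw : IsNice G w) :
    List.Chain' adj w ∧ w.getLast? = some (Sum.inr true) ∧
      w.head? ≠ some (Sum.inr false) ∧ ∀ g : Perm', Sum.inl g ∈ w → g ∈ G ∧ g ≠ 1 := by
  rcases hw with ⟨k, hk, rfl⟩ | ⟨bs, hne, hmem, ⟨p, hlastp, hppos⟩, rfl⟩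
  · have hk' : (0 : ℤ) ≤ (k : ℤ) := by exact_mod_cast Nat.zero_le k
    rw [xpow_pos hk']
    have hkt : (k : ℤ).toNat = k := Int.toNat_natCast k
    refine ⟨chain'_adj_replicate _ _, ?_, ?_, ?_⟩
    · rw [List.getLast?_replicate, hkt]
      have : k ≠ 0 := by omega
      simp [this]
    · intro h
      have := List.eq_of_mem_replicate (List.mem_of_mem_head? (by rw [h]; rfl))
      simp at this
    · intro g hg
      have := List.eq_of_mem_replicate hg
      simp at this
  · refine ⟨blocks_chain bs (fun p hp => (hmem p hp).2.2), ?_, ?_, ?_⟩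
    · rw [blocks_getLast bs p hlastp, getLast?_blockWord hppos]
    · cases bs with
      | nil => exact absurd rfl hne
      | cons q rest =>
        rw [blocks_head]
        simp
    · intro g hg
      rw [List.mem_flatten] at hg
      obtain ⟨l, hl, hgl⟩ := hg
      rw [List.mem_map] at hl
      obtain ⟨p', hp', rfl⟩ := hl
      rcases List.mem_cons.1 hgl with h | h
      · have : g = p'.1 := by injection h
        subst this
        exact ⟨(hmem p' hp').1, (hmem p' hp').2.1⟩
      · obtain ⟨j, b, hx, -⟩ := xpow_repl p'.2
        rw [hx] at h
        have := List.eq_of_mem_replicate h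
        simp at this

/-- The key combinatorial lemma for domain extension: adding a fresh pair `(n, m)`
with `m` sufficiently generic creates no new fixed points along a nice word. -/
lemma lemma1 (s : Set (ℕ × ℕ)) (Γ : Set Perm') (n m : ℕ)
    (hn : n ∉ pdom s) (hm1 : m ∉ pdom s) (hm2 : m ∉ pran s) (hmn : m ≠ n)
    (hΓ : ∀ g ∈ Γ, g m ∉ pdom s ∧ g m ∉ pran s ∧ g m ≠ n ∧ g m ≠ m ∧
      g⁻¹ m ∉ pdom s ∧ g⁻¹ m ∉ pran s ∧ g⁻¹ m ≠ n) :
    ∀ N (v : Word), v.length ≤ N → List.Chain' adj v →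
      (∀ g : Perm', Sum.inl g ∈ v → g ∈ Γ) →
      (∀ g : Perm', v.head? ≠ some (Sum.inl g)) →
      ∀ c b, c ≠ m → chainRel (insert (n, m) s) v c b →
      (chainRel s v c b ∧ b ≠ m) ∨ b = m ∨ ∃ g ∈ Γ, b = g m := by
  intro N
  induction N with
  | zero =>
    intro v hlen _ _ _ c b hc hcb
    have hv : v = [] := List.length_eq_zero_iff.1 (Nat.le_zero.1 hlen)
    subst hv
    exact Or.inl ⟨hcb, hcb ▸ hc⟩
  | succ N IH =>
    intro v hlen hch hlet hhd c b hc hcb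
    -- auxiliary continuation: after a safe `x`/`x⁻¹` step
    have aux : ∀ (v' : Word), v'.length ≤ N → List.Chain' adj v' →
        (∀ g : Perm', Sum.inl g ∈ v' → g ∈ Γ) →
        ∀ d b', d ≠ m → (d ∈ pdom s ∨ d ∈ pran s) → chainRel (insert (n, m) s) v' d b' →
        (chainRel s v' d b' ∧ b' ≠ m) ∨ b' = m ∨ ∃ g ∈ Γ, b' = g m := by
      intro v' hlen' hch' hlet' d b' hd hdD hdb'
      cases v' with
      | nil => exact Or.inl ⟨hdb', hdb' ▸ hd⟩
      | cons l v'' =>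
        cases l with
        | inr bb => exact IH _ hlen' hch' hlet' (by simp) d b' hd hdb'
        | inl g =>
          obtain ⟨e, he, hrest⟩ := hdb'
          have hgΓ := hlet' g (List.mem_cons_self)
          have heB : e ≠ m := by
            intro he2
            have hd' : d = g⁻¹ m := by rw [← he2, ← he]; simp
            rcases hdD with h | h
            · exact (hΓ g hgΓ).2.2.2.2.1 (hd' ▸ h)
            · exact (hΓ g hgΓ).2.2.2.2.2.1 (hd' ▸ h)
          have hhd'' : ∀ g' : Perm', v''.head? ≠ some (Sum.inl g') := by
            intro g' hcon
            cases v'' with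
            | nil => simp at hcon
            | cons l' rest =>
              simp only [List.head?_cons, Option.some_inj] at hcon
              subst hcon
              exact (List.isChain_cons_cons.1 hch').1
          have hlen'' : v''.length ≤ N := by
            simp only [List.length_cons] at hlen'
            omega
          have hrec := IH v'' hlen'' hch'.tail
            (fun g' hg' => hlet' g' (List.mem_cons_of_mem _ hg')) hhd'' e b' heB hrest
          rcases hrec with ⟨hs, hb⟩ | h
          · exact Or.inl ⟨⟨e, he, hs⟩, hb⟩
          · exact Or.inr h
    cases v with
    | nil => exact Or.inl ⟨hcb, hcb ▸ hc⟩
    | cons l v' =>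
      have hlen' : v'.length ≤ N := by
        simp only [List.length_cons] at hlen
        omega
      cases l with
      | inl g => exact absurd rfl (hhd g)
      | inr bb =>
        obtain ⟨d, hd, hrest⟩ := hcb
        cases bb with
        | false =>
          -- `x⁻¹` step: `(d, c) ∈ insert (n, m) s`
          rcases Set.mem_insert_iff.1 hd with hd | hd
          · exact absurd (pair_eq hd).2 hc
          · have hdm : d ≠ m := fun h => hm1 (h ▸ mem_pdom hd)
            have hres := aux v' hlen' hch.tail
              (fun g' hg' => hlet g' (List.mem_cons_of_mem _ hg')) d b hdm
              (Or.inl (mem_pdom hd)) hrest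
            rcases hres with ⟨hs, hb⟩ | h
            · exact Or.inl ⟨⟨d, hd, hs⟩, hb⟩
            · exact Or.inr h
        | true =>
          -- `x` step: `(c, d) ∈ insert (n, m) s`
          rcases Set.mem_insert_iff.1 hd with hd | hd
          · -- the new pair fires: c = n, d = m
            obtain ⟨hcn, hdm⟩ := pair_eq hd
            rw [hdm] at hrest
            cases v' with
            | nil => exact Or.inr (Or.inl hrest.symm)
            | cons l' v'' =>
              cases l' with
              | inr bb' =>
                cases bb' with
                | false => exact absurd (List.isChain_cons_cons.1 hch).1 (by simp)
                | true =>
                  obtain ⟨e, he, -⟩ := hrest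
                  rcases Set.mem_insert_iff.1 he with he | he
                  · exact absurd (pair_eq he).1 hmn
                  · exact absurd (mem_pdom he) hm1
              | inl g =>
                obtain ⟨e, he, hrest2⟩ := hrest
                have he' : e = g m := he.symm
                subst he'
                have hgΓ := hlet g (List.mem_cons_of_mem _ (List.mem_cons_self))
                cases v'' with
                | nil => exact Or.inr (Or.inr ⟨g, hgΓ, hrest2.symm⟩)
                | cons l'' v''' =>
                  cases l'' with
                  | inl g' => exact absurd (List.isChain_cons_cons.1 hch.tail).1 (by simp)
                  | inr bb'' =>
                    obtain ⟨f, hf, -⟩ := hrest2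
                    cases bb'' with
                    | true =>
                      rcases Set.mem_insert_iff.1 hf with hf | hf
                      · exact absurd (pair_eq hf).1 (hΓ g hgΓ).2.2.1
                      · exact absurd (mem_pdom hf) (hΓ g hgΓ).1
                    | false =>
                      rcases Set.mem_insert_iff.1 hf with hf | hf
                      · exact absurd (pair_eq hf).2 (hΓ g hgΓ).2.2.2.1
                      · exact absurd (mem_pran hf) (hΓ g hgΓ).2.1
          · -- safe step in `s`
            have hdm : d ≠ m := fun h => hm2 (h ▸ mem_pran hd)
            have hres := aux v' hlen' hch.tail
              (fun g' hg' => hlet g' (List.mem_cons_of_mem _ hg')) d b hdm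
              (Or.inr (mem_pran hd)) hrest
            rcases hres with ⟨hs, hb⟩ | h
            · exact Or.inl ⟨⟨d, hd, hs⟩, hb⟩
            · exact Or.inr h

/-- The key combinatorial lemma for range extension: adding a fresh pair `(n, m)`
with `n` sufficiently generic creates no new fixed points along a nice word. -/
lemma lemma2 (s : Set (ℕ × ℕ)) (Γ : Set Perm') (n m : ℕ)
    (hm : m ∉ pran s) (hn1 : n ∉ pdom s) (hn2 : n ∉ pran s) (hnm : n ≠ m)
    (hΓ : ∀ g ∈ Γ, g n ∉ pdom s ∧ g n ∉ pran s ∧ g n ≠ m ∧ g n ≠ n ∧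
      g⁻¹ n ∉ pdom s ∧ g⁻¹ n ∉ pran s ∧ g⁻¹ n ≠ m ∧ g m ≠ n) :
    ∀ N (v : Word), v.length ≤ N → List.Chain' adj v →
      (∀ g : Perm', Sum.inl g ∈ v → g ∈ Γ) →
      (∀ g : Perm', v.head? ≠ some (Sum.inl g)) →
      v.getLast? ≠ some (Sum.inr false) →
      ∀ c b, c ≠ n → chainRel (insert (n, m) s) v c b →
      (chainRel s v c b ∧ b ≠ n) ∨ ∃ g ∈ Γ, b = g n := by
  intro N
  induction N with
  | zero =>
    intro v hlen _ _ _ _ c b hc hcb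
    have hv : v = [] := List.length_eq_zero_iff.1 (Nat.le_zero.1 hlen)
    subst hv
    exact Or.inl ⟨hcb, hcb ▸ hc⟩
  | succ N IH =>
    intro v hlen hch hlet hhd hlast c b hc hcb
    have aux : ∀ (v' : Word), v'.length ≤ N → List.Chain' adj v' →
        (∀ g : Perm', Sum.inl g ∈ v' → g ∈ Γ) →
        v'.getLast? ≠ some (Sum.inr false) →
        ∀ d b', d ≠ n → (d ∈ pdom s ∨ d ∈ pran s) → chainRel (insert (n, m) s) v' d b' →
        (chainRel s v' d b' ∧ b' ≠ n) ∨ ∃ g ∈ Γ, b' = g n := by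
      intro v' hlen' hch' hlet' hlast' d b' hd hdD hdb'
      cases v' with
      | nil => exact Or.inl ⟨hdb', hdb' ▸ hd⟩
      | cons l v'' =>
        cases l with
        | inr bb => exact IH _ hlen' hch' hlet' (by simp) hlast' d b' hd hdb'
        | inl g =>
          obtain ⟨e, he, hrest⟩ := hdb'
          have hgΓ := hlet' g (List.mem_cons_self)
          have heB : e ≠ n := by
            intro he2
            have hd' : d = g⁻¹ n := by rw [← he2, ← he]; simp
            rcases hdD with h | h
            · exact (hΓ g hgΓ).2.2.2.2.1 (hd' ▸ h)
            · exact (hΓ g hgΓ).2.2.2.2.2.1 (hd' ▸ h)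
          have hhd'' : ∀ g' : Perm', v''.head? ≠ some (Sum.inl g') := by
            intro g' hcon
            cases v'' with
            | nil => simp at hcon
            | cons l' rest =>
              simp only [List.head?_cons, Option.some_inj] at hcon
              subst hcon
              exact (List.isChain_cons_cons.1 hch').1
          have hlen'' : v''.length ≤ N := by
            simp only [List.length_cons] at hlen'
            omega
          have hlast'' : v''.getLast? ≠ some (Sum.inr false) := by
            cases v'' with
            | nil => simp
            | cons l' rest =>
              rw [← List.getLast?_cons_cons (a := (Sum.inl g : Letter))]
              exact hlast'
          have hrec := IH v'' hlen'' hch'.tail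
            (fun g' hg' => hlet' g' (List.mem_cons_of_mem _ hg')) hhd'' hlast'' e b' heB hrest
          rcases hrec with ⟨hs, hb⟩ | h
          · exact Or.inl ⟨⟨e, he, hs⟩, hb⟩
          · exact Or.inr h
    cases v with
    | nil => exact Or.inl ⟨hcb, hcb ▸ hc⟩
    | cons l v' =>
      have hlen' : v'.length ≤ N := by
        simp only [List.length_cons] at hlen
        omega
      have hlast' : v' ≠ [] → v'.getLast? ≠ some (Sum.inr false) := by
        intro hne
        cases v' with
        | nil => exact absurd rfl hne
        | cons l' rest =>
          rw [← List.getLast?_cons_cons (a := l)]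
          exact hlast
      cases l with
      | inl g => exact absurd rfl (hhd g)
      | inr bb =>
        obtain ⟨d, hd, hrest⟩ := hcb
        cases bb with
        | true =>
          -- `x` step: `(c, d) ∈ insert (n, m) s`
          rcases Set.mem_insert_iff.1 hd with hd | hd
          · exact absurd (pair_eq hd).1 hc
          · have hdn : d ≠ n := fun h => hn2 (h ▸ mem_pran hd)
            have hlast'' : v'.getLast? ≠ some (Sum.inr false) := by
              cases v' with
              | nil => simp
              | cons l' rest => exact hlast' (by simp)
            have hres := aux v' hlen' hch.tail
              (fun g' hg' => hlet g' (List.mem_cons_of_mem _ hg')) hlast'' d b hdn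
              (Or.inr (mem_pran hd)) hrest
            rcases hres with ⟨hs, hb⟩ | h
            · exact Or.inl ⟨⟨d, hd, hs⟩, hb⟩
            · exact Or.inr h
        | false =>
          -- `x⁻¹` step: `(d, c) ∈ insert (n, m) s`
          rcases Set.mem_insert_iff.1 hd with hd | hd
          · -- the new pair fires: d = n, c = m
            obtain ⟨hdn, hcm⟩ := pair_eq hd
            rw [hdn] at hrest
            cases v' with
            | nil =>
              rw [List.getLast?_singleton] at hlast
              exact absurd rfl hlast
            | cons l' v'' =>
              cases l' with
              | inr bb' =>
                cases bb' with
                | true => exact absurd (List.isChain_cons_cons.1 hch).1 (by simp)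
                | false =>
                  obtain ⟨e, he, -⟩ := hrest
                  rcases Set.mem_insert_iff.1 he with he | he
                  · exact absurd (pair_eq he).2 hnm
                  · exact absurd (mem_pran he) hn2
              | inl g =>
                obtain ⟨e, he, hrest2⟩ := hrest
                have he' : e = g n := he.symm
                subst he'
                have hgΓ := hlet g (List.mem_cons_of_mem _ (List.mem_cons_self))
                cases v'' with
                | nil => exact Or.inr ⟨g, hgΓ, hrest2.symm⟩
                | cons l'' v''' =>
                  cases l'' with
                  | inl g' => exact absurd (List.isChain_cons_cons.1 hch.tail).1 (by simp)
                  | inr bb'' =>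
                    obtain ⟨f, hf, -⟩ := hrest2
                    cases bb'' with
                    | true =>
                      rcases Set.mem_insert_iff.1 hf with hf | hf
                      · exact absurd (pair_eq hf).1 (hΓ g hgΓ).2.2.2.1
                      · exact absurd (mem_pdom hf) (hΓ g hgΓ).1
                    | false =>
                      rcases Set.mem_insert_iff.1 hf with hf | hf
                      · exact absurd (pair_eq hf).2 (hΓ g hgΓ).2.2.1
                      · exact absurd (mem_pran hf) (hΓ g hgΓ).2.1
          · -- safe step in `s`
            have hdn : d ≠ n := fun h => hn1 (h ▸ mem_pdom hd)
            have hlast'' : v'.getLast? ≠ some (Sum.inr false) := by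
              cases v' with
              | nil => simp
              | cons l' rest => exact hlast' (by simp)
            have hres := aux v' hlen' hch.tail
              (fun g' hg' => hlet g' (List.mem_cons_of_mem _ hg')) hlast'' d b hdn
              (Or.inl (mem_pdom hd)) hrest
            rcases hres with ⟨hs, hb⟩ | h
            · exact Or.inl ⟨⟨d, hd, hs⟩, hb⟩
            · exact Or.inr h

/-- Fixed points are preserved when extending the domain by a generic value. -/
lemma key1 {s : Set (ℕ × ℕ)} {Γ : Set Perm'} {n m : ℕ}
    (hn : n ∉ pdom s) (hm1 : m ∉ pdom s) (hm2 : m ∉ pran s) (hmn : m ≠ n)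
    (hΓ : ∀ g ∈ Γ, g m ∉ pdom s ∧ g m ∉ pran s ∧ g m ≠ n ∧ g m ≠ m ∧
      g⁻¹ m ∉ pdom s ∧ g⁻¹ m ∉ pran s ∧ g⁻¹ m ≠ n)
    {w : Word} (hch : List.Chain' adj w) (hlast : w.getLast? = some (Sum.inr true))
    (hlet : ∀ g : Perm', Sum.inl g ∈ w → g ∈ Γ) :
    wordFix (insert (n, m) s) w = wordFix s w := by
  ext a
  simp only [wordFix, Set.mem_setOf_eq, wordRel_iff_chainRel]
  constructor
  · intro hfix
    have hchv : List.Chain' adj w.reverse :=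
      List.isChain_reverse.2 (List.IsChain.imp (fun a b h => adj_symm h) hch)
    have hheadv : w.reverse.head? = some (Sum.inr true) := by
      rw [List.head?_reverse]; exact hlast
    have hletv : ∀ g : Perm', Sum.inl g ∈ w.reverse → g ∈ Γ :=
      fun g hg => hlet g (List.mem_reverse.1 hg)
    obtain ⟨v₀, hv⟩ : ∃ v₀, w.reverse = Sum.inr true :: v₀ := by
      cases hveq : w.reverse with
      | nil => rw [hveq] at hheadv; exact absurd hheadv (by simp)
      | cons l v₀ =>
        rw [hveq, List.head?_cons, Option.some_inj] at hheadv
        exact ⟨v₀, by rw [hheadv]⟩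
    rw [hv] at hfix hchv hletv
    rw [hv]
    have ham : a ≠ m := by
      intro h
      obtain ⟨d, hd, -⟩ := hfix
      rcases Set.mem_insert_iff.1 hd with hd | hd
      · exact hmn (h.symm.trans (pair_eq hd).1)
      · exact hm1 (h ▸ mem_pdom hd)
    have hres := lemma1 s Γ n m hn hm1 hm2 hmn hΓ (Sum.inr true :: v₀ : Word).length
      (Sum.inr true :: v₀) le_rfl hchv hletv
      (by simp) a a ham hfix
    rcases hres with ⟨hs, -⟩ | h | ⟨g, hgΓ, hgm⟩
    · exact hs
    · exact absurd h ham
    · exfalso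
      obtain ⟨d, hd, -⟩ := hfix
      rcases Set.mem_insert_iff.1 hd with hd | hd
      · exact (hΓ g hgΓ).2.2.1 (by rw [← hgm]; exact (pair_eq hd).1)
      · refine (hΓ g hgΓ).1 ?_
        rw [← hgm]
        exact mem_pdom hd
  · exact fun hfix => chainRel_mono (Set.subset_insert _ _) hfix

/-- Fixed points are preserved when extending the range by a generic value. -/
lemma key2 {s : Set (ℕ × ℕ)} {Γ : Set Perm'} {n m : ℕ}
    (hm : m ∉ pran s) (hn1 : n ∉ pdom s) (hn2 : n ∉ pran s) (hnm : n ≠ m)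
    (hΓ : ∀ g ∈ Γ, g n ∉ pdom s ∧ g n ∉ pran s ∧ g n ≠ m ∧ g n ≠ n ∧
      g⁻¹ n ∉ pdom s ∧ g⁻¹ n ∉ pran s ∧ g⁻¹ n ≠ m ∧ g m ≠ n)
    {w : Word} (hch : List.Chain' adj w) (hlast : w.getLast? = some (Sum.inr true))
    (hhead : w.head? ≠ some (Sum.inr false))
    (hlet : ∀ g : Perm', Sum.inl g ∈ w → g ∈ Γ) :
    wordFix (insert (n, m) s) w = wordFix s w := by
  ext a
  simp only [wordFix, Set.mem_setOf_eq, wordRel_iff_chainRel]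
  constructor
  · intro hfix
    have hchv : List.Chain' adj w.reverse :=
      List.isChain_reverse.2 (List.IsChain.imp (fun a b h => adj_symm h) hch)
    have hheadv : w.reverse.head? = some (Sum.inr true) := by
      rw [List.head?_reverse]; exact hlast
    have hlastv : w.reverse.getLast? ≠ some (Sum.inr false) := by
      rw [List.getLast?_reverse]; exact hhead
    have hletv : ∀ g : Perm', Sum.inl g ∈ w.reverse → g ∈ Γ :=
      fun g hg => hlet g (List.mem_reverse.1 hg)
    obtain ⟨v₀, hv⟩ : ∃ v₀, w.reverse = Sum.inr true :: v₀ := by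
      cases hveq : w.reverse with
      | nil => rw [hveq] at hheadv; exact absurd hheadv (by simp)
      | cons l v₀ =>
        rw [hveq, List.head?_cons, Option.some_inj] at hheadv
        exact ⟨v₀, by rw [hheadv]⟩
    rw [hv] at hfix hchv hlastv hletv
    rw [hv]
    by_cases han : a = n
    · exfalso
      rw [han] at hfix
      obtain ⟨d, hd, hrest⟩ := hfix
      rcases Set.mem_insert_iff.1 hd with hd | hd
      swap
      · exact hn1 (mem_pdom hd)
      obtain ⟨-, hdm⟩ := pair_eq hd
      rw [hdm] at hrest
      cases v₀ with
      | nil => exact hnm hrest.symm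
      | cons l v₁ =>
        have hlast₁ : (l :: v₁).getLast? ≠ some (Sum.inr false) := by
          rw [← List.getLast?_cons_cons (a := (Sum.inr true : Letter))]
          exact hlastv
        cases l with
        | inr bb =>
          cases bb with
          | false => exact absurd (List.isChain_cons_cons.1 hchv).1 (by simp)
          | true =>
            have hres := lemma2 s Γ n m hm hn1 hn2 hnm hΓ
              (Sum.inr true :: v₁ : Word).length (Sum.inr true :: v₁) le_rfl
              hchv.tail (fun g' hg' => hletv g' (List.mem_cons_of_mem _ hg'))
              (by simp) hlast₁ m n (fun h => hnm h.symm) hrest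
            rcases hres with ⟨-, hbn⟩ | ⟨g, hgΓ, hgn⟩
            · exact hbn rfl
            · exact (hΓ g hgΓ).2.2.2.1 hgn.symm
        | inl g =>
          obtain ⟨e, he, hrest2⟩ := hrest
          have he' : e = g m := he.symm
          subst he'
          have hgΓ := hletv g (List.mem_cons_of_mem _ (List.mem_cons_self))
          cases v₁ with
          | nil => exact (hΓ g hgΓ).2.2.2.2.2.2.2 hrest2
          | cons l' v₂ =>
            have hlast₂ : (l' :: v₂).getLast? ≠ some (Sum.inr false) := by
              rw [← List.getLast?_cons_cons (a := (Sum.inl g : Letter))]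
              exact hlast₁
            have hhd₂ : ∀ g' : Perm', (l' :: v₂).head? ≠ some (Sum.inl g') := by
              intro g' hcon
              rw [List.head?_cons, Option.some_inj] at hcon
              subst hcon
              exact (List.isChain_cons_cons.1 hchv.tail).1
            have hres := lemma2 s Γ n m hm hn1 hn2 hnm hΓ ((l' :: v₂).length) (l' :: v₂) le_rfl
              hchv.tail.tail
              (fun g' hg' => hletv g' (List.mem_cons_of_mem _ (List.mem_cons_of_mem _ hg')))
              hhd₂ hlast₂ (g m) n (hΓ g hgΓ).2.2.2.2.2.2.2 hrest2
            rcases hres with ⟨-, hbn⟩ | ⟨g', hg'Γ, hg'n⟩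
            · exact hbn rfl
            · exact (hΓ g' hg'Γ).2.2.2.1 hg'n.symm
    · have hres := lemma2 s Γ n m hm hn1 hn2 hnm hΓ
        (Sum.inr true :: v₀ : Word).length (Sum.inr true :: v₀) le_rfl hchv hletv
        (by simp) hlastv a a han hfix
      rcases hres with ⟨hs, -⟩ | ⟨g, hgΓ, hgm⟩
      · exact hs
      · exfalso
        obtain ⟨d, hd, -⟩ := hfix
        rcases Set.mem_insert_iff.1 hd with hd | hd
        · exact han (pair_eq hd).1
        · refine (hΓ g hgΓ).1 ?_
          rw [← hgm]
          exact mem_pdom hd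
  · exact fun hfix => chainRel_mono (Set.subset_insert _ _) hfix

lemma partInj_insert {s : Set (ℕ × ℕ)} (hs : PartInj s) {n m : ℕ}
    (hn : n ∉ pdom s) (hm : m ∉ pran s) : PartInj (insert (n, m) s) := by
  constructor
  · intro a b c h1 h2
    rcases Set.mem_insert_iff.1 h1 with h1 | h1 <;>
      rcases Set.mem_insert_iff.1 h2 with h2 | h2
    · rw [(pair_eq h1).2, (pair_eq h2).2]
    · exact absurd (((pair_eq h1).1) ▸ mem_pdom h2) hn
    · exact absurd (((pair_eq h2).1) ▸ mem_pdom h1) hn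
    · exact hs.1 h1 h2
  · intro a b c h1 h2
    rcases Set.mem_insert_iff.1 h1 with h1 | h1 <;>
      rcases Set.mem_insert_iff.1 h2 with h2 | h2
    · rw [(pair_eq h1).1, (pair_eq h2).1]
    · exact absurd (((pair_eq h1).2) ▸ mem_pran h2) hm
    · exact absurd (((pair_eq h2).2) ▸ mem_pran h1) hm
    · exact hs.2 h1 h2


/-- Domain and range extension for Zhang's forcing `Z_G`. -/
theorem statement1 (G : Subgroup Perm') (hG : Cofinitary G)
    (s : Set (ℕ × ℕ)) (E : Set Word) (hc : ZCond G s E) :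
    (∀ n : ℕ, n ∉ pdom s →
      {m : ℕ | ¬ (ZCond G (insert (n, m) s) E ∧
        ZLe (insert (n, m) s) E s E)}.Finite) ∧
    (∀ m : ℕ, m ∉ pran s →
      {n : ℕ | ¬ (ZCond G (insert (n, m) s) E ∧
        ZLe (insert (n, m) s) E s E)}.Finite) := by
  obtain ⟨hsfin, hsinj, hEfin, hEnice⟩ := hc
  have hDfin : (pdom s ∪ pran s).Finite := (hsfin.image Prod.fst).union (hsfin.image Prod.snd)
  set Γ : Set Perm' := ⋃ w ∈ E, {g : Perm' | Sum.inl g ∈ w} with hΓdef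
  have hΓfin : Γ.Finite :=
    hEfin.biUnion (fun w _ => (w.finite_toSet).preimage (Sum.inl_injective.injOn))
  have hΓG : ∀ g ∈ Γ, g ∈ G ∧ g ≠ 1 := by
    intro g hg
    rw [hΓdef, Set.mem_iUnion₂] at hg
    obtain ⟨w, hw, hgw⟩ := hg
    exact (nice_facts (hEnice w hw)).2.2.2 g hgw
  have hΓmem : ∀ w ∈ E, ∀ g : Perm', Sum.inl g ∈ w → g ∈ Γ := by
    intro w hw g hg
    rw [hΓdef]
    exact Set.mem_biUnion hw hg
  have hfixfin : ∀ g ∈ Γ, {x : ℕ | g x = x}.Finite :=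
    fun g hg => hG g (hΓG g hg).1 (hΓG g hg).2
  constructor
  · -- domain extension
    intro n hn
    apply Set.Finite.subset
      (s := (pdom s ∪ pran s) ∪ ({n} ∪ ⋃ g ∈ Γ,
        ((⇑g) ⁻¹' ((pdom s ∪ pran s) ∪ {n}) ∪
          ((⇑(g⁻¹)) ⁻¹' ((pdom s ∪ pran s) ∪ {n}) ∪ {x : ℕ | g x = x}))))
    · refine hDfin.union ((Set.finite_singleton n).union (hΓfin.biUnion fun g hg => ?_))
      refine ((hDfin.union (Set.finite_singleton n)).preimage (g.injective.injOn)).union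
        (((hDfin.union (Set.finite_singleton n)).preimage ((g⁻¹ : Perm').injective.injOn)).union
          (hfixfin g hg))
    · intro m hmem
      simp only [Set.mem_setOf_eq] at hmem
      by_contra hmB
      apply hmem
      have c1 : m ∉ pdom s := fun h => hmB (Set.mem_union_left _ (Set.mem_union_left _ h))
      have c2 : m ∉ pran s := fun h => hmB (Set.mem_union_left _ (Set.mem_union_right _ h))
      have c3 : m ≠ n := fun h =>
        hmB (Set.mem_union_right _ (Set.mem_union_left _ (Set.mem_singleton_iff.2 h)))
      have cg : ∀ g ∈ Γ, g m ∉ pdom s ∧ g m ∉ pran s ∧ g m ≠ n ∧ g m ≠ m ∧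
          g⁻¹ m ∉ pdom s ∧ g⁻¹ m ∉ pran s ∧ g⁻¹ m ≠ n := by
        intro g hg
        refine ⟨fun h => ?_, fun h => ?_, fun h => ?_, fun h => ?_, fun h => ?_,
          fun h => ?_, fun h => ?_⟩
        · exact hmB (Set.mem_union_right _ (Set.mem_union_right _ (Set.mem_biUnion hg
            (Set.mem_union_left _ (Set.mem_preimage.2
              (Set.mem_union_left _ (Set.mem_union_left _ h)))))))
        · exact hmB (Set.mem_union_right _ (Set.mem_union_right _ (Set.mem_biUnion hg
            (Set.mem_union_left _ (Set.mem_preimage.2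
              (Set.mem_union_left _ (Set.mem_union_right _ h)))))))
        · exact hmB (Set.mem_union_right _ (Set.mem_union_right _ (Set.mem_biUnion hg
            (Set.mem_union_left _ (Set.mem_preimage.2
              (Set.mem_union_right _ (Set.mem_singleton_iff.2 h)))))))
        · exact hmB (Set.mem_union_right _ (Set.mem_union_right _ (Set.mem_biUnion hg
            (Set.mem_union_right _ (Set.mem_union_right _ h)))))
        · exact hmB (Set.mem_union_right _ (Set.mem_union_right _ (Set.mem_biUnion hg
            (Set.mem_union_right _ (Set.mem_union_left _ (Set.mem_preimage.2
              (Set.mem_union_left _ (Set.mem_union_left _ h))))))))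
        · exact hmB (Set.mem_union_right _ (Set.mem_union_right _ (Set.mem_biUnion hg
            (Set.mem_union_right _ (Set.mem_union_left _ (Set.mem_preimage.2
              (Set.mem_union_left _ (Set.mem_union_right _ h))))))))
        · exact hmB (Set.mem_union_right _ (Set.mem_union_right _ (Set.mem_biUnion hg
            (Set.mem_union_right _ (Set.mem_union_left _ (Set.mem_preimage.2
              (Set.mem_union_right _ (Set.mem_singleton_iff.2 h))))))))
      refine ⟨⟨hsfin.insert _, partInj_insert hsinj hn c2, hEfin, hEnice⟩,
        Set.subset_insert _ _, subset_rfl, ?_⟩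
      intro w hw
      obtain ⟨hchw, hlastw, -, -⟩ := nice_facts (hEnice w hw)
      exact key1 hn c1 c2 c3 cg hchw hlastw (hΓmem w hw)
  · -- range extension
    intro m hm
    apply Set.Finite.subset
      (s := (pdom s ∪ pran s) ∪ ({m} ∪ ⋃ g ∈ Γ,
        ((⇑g) ⁻¹' ((pdom s ∪ pran s) ∪ {m}) ∪
          ((⇑(g⁻¹)) ⁻¹' ((pdom s ∪ pran s) ∪ {m}) ∪ ({x : ℕ | g x = x} ∪ {g m})))))
    · refine hDfin.union ((Set.finite_singleton m).union (hΓfin.biUnion fun g hg => ?_))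
      refine ((hDfin.union (Set.finite_singleton m)).preimage (g.injective.injOn)).union
        (((hDfin.union (Set.finite_singleton m)).preimage ((g⁻¹ : Perm').injective.injOn)).union
          ((hfixfin g hg).union (Set.finite_singleton _)))
    · intro n hnmem
      simp only [Set.mem_setOf_eq] at hnmem
      by_contra hnB
      apply hnmem
      have c1 : n ∉ pdom s := fun h => hnB (Set.mem_union_left _ (Set.mem_union_left _ h))
      have c2 : n ∉ pran s := fun h => hnB (Set.mem_union_left _ (Set.mem_union_right _ h))
      have c3 : n ≠ m := fun h =>
        hnB (Set.mem_union_right _ (Set.mem_union_left _ (Set.mem_singleton_iff.2 h)))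
      have cg : ∀ g ∈ Γ, g n ∉ pdom s ∧ g n ∉ pran s ∧ g n ≠ m ∧ g n ≠ n ∧
          g⁻¹ n ∉ pdom s ∧ g⁻¹ n ∉ pran s ∧ g⁻¹ n ≠ m ∧ g m ≠ n := by
        intro g hg
        refine ⟨fun h => ?_, fun h => ?_, fun h => ?_, fun h => ?_, fun h => ?_,
          fun h => ?_, fun h => ?_, fun h => ?_⟩
        · exact hnB (Set.mem_union_right _ (Set.mem_union_right _ (Set.mem_biUnion hg
            (Set.mem_union_left _ (Set.mem_preimage.2
              (Set.mem_union_left _ (Set.mem_union_left _ h)))))))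
        · exact hnB (Set.mem_union_right _ (Set.mem_union_right _ (Set.mem_biUnion hg
            (Set.mem_union_left _ (Set.mem_preimage.2
              (Set.mem_union_left _ (Set.mem_union_right _ h)))))))
        · exact hnB (Set.mem_union_right _ (Set.mem_union_right _ (Set.mem_biUnion hg
            (Set.mem_union_left _ (Set.mem_preimage.2
              (Set.mem_union_right _ (Set.mem_singleton_iff.2 h)))))))
        · exact hnB (Set.mem_union_right _ (Set.mem_union_right _ (Set.mem_biUnion hg
            (Set.mem_union_right _ (Set.mem_union_right _ (Set.mem_union_left _ h))))))
        · exact hnB (Set.mem_union_right _ (Set.mem_union_right _ (Set.mem_biUnion hg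
            (Set.mem_union_right _ (Set.mem_union_left _ (Set.mem_preimage.2
              (Set.mem_union_left _ (Set.mem_union_left _ h))))))))
        · exact hnB (Set.mem_union_right _ (Set.mem_union_right _ (Set.mem_biUnion hg
            (Set.mem_union_right _ (Set.mem_union_left _ (Set.mem_preimage.2
              (Set.mem_union_left _ (Set.mem_union_right _ h))))))))
        · exact hnB (Set.mem_union_right _ (Set.mem_union_right _ (Set.mem_biUnion hg
            (Set.mem_union_right _ (Set.mem_union_left _ (Set.mem_preimage.2
              (Set.mem_union_right _ (Set.mem_singleton_iff.2 h))))))))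
        · exact hnB (Set.mem_union_right _ (Set.mem_union_right _ (Set.mem_biUnion hg
            (Set.mem_union_right _ (Set.mem_union_right _ (Set.mem_union_right _
              (Set.mem_singleton_iff.2 h.symm)))))))
      refine ⟨⟨hsfin.insert _, partInj_insert hsinj c1 hm, hEfin, hEnice⟩,
        Set.subset_insert _ _, subset_rfl, ?_⟩
      intro w hw
      obtain ⟨hchw, hlastw, hheadw, -⟩ := nice_facts (hEnice w hw)
      exact key2 hm c1 c2 c3 cg hchw hlastw hheadw (hΓmem w hw)

end
end

section
/- Let G be a cofinitary group, T ∈ I_i(G)^+, t ∈ T, N ∈ ℕ, and (s,E₀) a condition of Zhang's forcing Z_G with E₀ ⊆ W¹_G. Then there is t' ∈ T with t ⊆ t' such that the set of all k ∈ dom(t') \ dom(t) for which (s ∪ {(k, t'(k))}, E₀) is a condition of Z_G extending (s,E₀) has more than N elements. -/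
noncomputable section

/-- Extract the relevant permutation from a word in `W¹_G`. -/
private def extractor : Word → Perm'
  | [Sum.inl g, Sum.inr true] => g⁻¹
  | _ => 1

private lemma xOcc_xpow (k : ℤ) : xOccurrences (xpow k) = k.natAbs := by
  unfold xOccurrences xpow
  split <;> simp [List.countP_replicate] <;> omega

private lemma xOcc_block (p : Perm' × ℤ) : xOccurrences (blockWord p) = p.2.natAbs := by
  have h := xOcc_xpow p.2
  unfold xOccurrences at *
  simp [blockWord, List.countP_cons, h]

private lemma xOcc_blocks (bs : List (Perm' × ℤ)) :
    xOccurrences ((bs.map blockWord).flatten) = (bs.map (fun p => p.2.natAbs)).sum := by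
  induction bs with
  | nil => rfl
  | cons p rest ih =>
    have h := xOcc_block p
    unfold xOccurrences at *
    simp [List.countP_append, h, ih]

private lemma niceOne_shape (G : Subgroup Perm') (w : Word) (h : IsNiceOne G w) :
    w = [Sum.inr true] ∨ ∃ g : Perm', g ∈ G ∧ g ≠ 1 ∧ w = [Sum.inl g, Sum.inr true] := by
  obtain ⟨hnice, hocc⟩ := h
  rcases hnice with ⟨k, hk, rfl⟩ | ⟨bs, hne, hall, ⟨p, hlast, hpos⟩, rfl⟩
  · left
    have := xOcc_xpow (k : ℤ)
    rw [hocc] at this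
    have hk1 : k = 1 := by omega
    subst hk1; rfl
  · have hsum : (bs.map (fun p => p.2.natAbs)).sum = 1 := by
      rw [← xOcc_blocks]; exact hocc
    cases bs with
    | nil => exact absurd rfl hne
    | cons q rest =>
      cases rest with
      | nil =>
        right
        have hq := hall q List.mem_cons_self
        have hpq : q = p := by simpa using hlast
        subst hpq
        have h1 : q.2.natAbs = 1 := by simpa using hsum
        have h2 : q.2 = 1 := by omega
        refine ⟨q.1, hq.1, hq.2.1, ?_⟩
        have : blockWord q = [Sum.inl q.1, Sum.inr true] := by
          unfold blockWord
          rw [h2]; rfl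
        simp [this]
      | cons r rest' =>
        exfalso
        have hq := (hall q (by simp)).2.2
        have hr := (hall r (by simp)).2.2
        simp only [List.map_cons, List.sum_cons] at hsum
        omega

private lemma chain_lemma (T : Set (List ℕ)) (P : Set Perm') (P₀ : Set Perm')
    (hsub : P₀ ⊆ P) (hfin : P₀.Finite) (hT : TreePos P T)
    (t : List ℕ) (ht : t ∈ T) (M : ℕ) :
    ∃ t' ∈ T, t <+: t' ∧ ∃ K : Finset ℕ, K.card = M ∧
      ∀ k ∈ K, t.length ≤ k ∧ k < t'.length ∧ ∀ f ∈ P₀, t'.getD k 0 ≠ f k := by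
  induction M with
  | zero => exact ⟨t, ht, List.prefix_refl t, ∅, rfl, by simp⟩
  | succ M ih =>
    obtain ⟨t₁, ht₁, hpre₁, K, hK, hKgood⟩ := ih
    obtain ⟨t₂, ht₂, hpre₂, k, hk₁, hk₂, hkgood⟩ := hT.2 t₁ ht₁ P₀ hsub hfin
    refine ⟨t₂, ht₂, hpre₁.trans hpre₂, insert k K, ?_, ?_⟩
    · rw [Finset.card_insert_of_notMem, hK]
      intro hkK
      exact absurd hk₁ (hKgood k hkK).2.1.not_ge
    · intro k' hk'
      rcases Finset.mem_insert.mp hk' with rfl | hk'K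
      · exact ⟨le_trans hpre₁.length_le hk₁, hk₂, hkgood⟩
      · obtain ⟨h1, h2, h3⟩ := hKgood k' hk'K
        have hlt₂ : k' < t₂.length := lt_of_lt_of_le h2 hpre₂.length_le
        refine ⟨h1, hlt₂, fun f hf => ?_⟩
        have heq : t₂.getD k' 0 = t₁.getD k' 0 := by
          rw [List.getD_eq_getElem _ _ hlt₂, List.getD_eq_getElem _ _ h2]
          exact (hpre₂.getElem h2).symm
        rw [heq]; exact h3 f hf

/-- Many extensions along a positive tree, for conditions whose word side
consists of nice words with exactly one occurrence of `x` or `x⁻¹`. -/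
theorem statement2 (G : Subgroup Perm') (hG : Cofinitary G)
    (T : Set (List ℕ)) (hT : TreePos (G : Set Perm') T)
    (t : List ℕ) (ht : t ∈ T) (N : ℕ)
    (s : Set (ℕ × ℕ)) (E₀ : Set Word) (hc : ZCond G s E₀)
    (hE₀ : ∀ w ∈ E₀, IsNiceOne G w) :
    ∃ t' ∈ T, t <+: t' ∧
      N < {k : ℕ | t.length ≤ k ∧ k < t'.length ∧
        ZCond G (insert (k, t'.getD k 0) s) E₀ ∧
        ZLe (insert (k, t'.getD k 0) s) E₀ s E₀}.ncard := by
  classical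
  obtain ⟨hsfin, hsinj, hE₀fin, hE₀nice⟩ := hc
  have hshape : ∀ w ∈ E₀, w = [Sum.inr true] ∨
      ∃ g : Perm', g ∈ G ∧ g ≠ 1 ∧ w = [Sum.inl g, Sum.inr true] :=
    fun w hw => niceOne_shape G w (hE₀ w hw)
  set P₀ : Set Perm' := insert 1 (extractor '' E₀) with hP₀def
  have hP₀fin : P₀.Finite := (hE₀fin.image _).insert _
  have hP₀G : P₀ ⊆ (G : Set Perm') := by
    intro f hf
    rcases hf with rfl | ⟨w, hw, rfl⟩
    · exact G.one_mem
    · rcases hshape w hw with rfl | ⟨g, hg, hg1, rfl⟩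
      · exact G.one_mem
      · exact G.inv_mem hg
  set sF : Finset (ℕ × ℕ) := hsfin.toFinset with hsFdef
  set M : ℕ := N + 1 + sF.card + sF.card with hMdef
  obtain ⟨t', ht', hpre, K, hK, hKgood⟩ :=
    chain_lemma T (G : Set Perm') P₀ hP₀G hP₀fin hT t ht M
  have hnodup : t'.Nodup := hT.1.2.2 t' ht'
  set imgD : Finset ℕ := sF.image Prod.fst with himgD
  set imgR : Finset ℕ := sF.image Prod.snd with himgR
  set Bad : Finset ℕ := K.filter (fun k => k ∈ imgD ∨ t'.getD k 0 ∈ imgR) with hBad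
  have hBadcard : Bad.card ≤ imgD.card + imgR.card := by
    have hsubB : Bad ⊆ K.filter (fun k => k ∈ imgD) ∪
        K.filter (fun k => t'.getD k 0 ∈ imgR) := by
      intro k hk
      rw [Finset.mem_filter] at hk
      rcases hk.2 with h | h
      · exact Finset.mem_union_left _ (Finset.mem_filter.mpr ⟨hk.1, h⟩)
      · exact Finset.mem_union_right _ (Finset.mem_filter.mpr ⟨hk.1, h⟩)
    calc Bad.card ≤ (K.filter (fun k => k ∈ imgD) ∪
          K.filter (fun k => t'.getD k 0 ∈ imgR)).card := Finset.card_le_card hsubB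
      _ ≤ (K.filter (fun k => k ∈ imgD)).card +
          (K.filter (fun k => t'.getD k 0 ∈ imgR)).card := Finset.card_union_le _ _
      _ ≤ imgD.card + imgR.card := by
          have ha1 : (K.filter (fun k => k ∈ imgD)).card ≤ imgD.card :=
            Finset.card_le_card (fun k hk => (Finset.mem_filter.mp hk).2)
          have ha2 : (K.filter (fun k => t'.getD k 0 ∈ imgR)).card ≤ imgR.card := by
            refine Finset.card_le_card_of_injOn (fun k => t'.getD k 0)
              (fun k hk => (Finset.mem_filter.mp hk).2) ?_
            intro a ha b hb hab
            simp only [Finset.coe_filter, Set.mem_setOf_eq] at ha hb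
            have hal : a < t'.length := (hKgood a ha.1).2.1
            have hbl : b < t'.length := (hKgood b hb.1).2.1
            simp only at hab
            rw [List.getD_eq_getElem _ _ hal, List.getD_eq_getElem _ _ hbl] at hab
            exact (List.Nodup.getElem_inj_iff hnodup).mp hab
          exact Nat.add_le_add ha1 ha2
  set Good : Finset ℕ := K \ Bad with hGood
  have hGoodcard : N < Good.card := by
    have h1 : Good.card = K.card - Bad.card :=
      Finset.card_sdiff_of_subset (Finset.filter_subset _ _)
    have h2 : imgD.card ≤ sF.card := Finset.card_image_le
    have h3 : imgR.card ≤ sF.card := Finset.card_image_le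
    omega
  set S : Set ℕ := {k : ℕ | t.length ≤ k ∧ k < t'.length ∧
        ZCond G (insert (k, t'.getD k 0) s) E₀ ∧
        ZLe (insert (k, t'.getD k 0) s) E₀ s E₀} with hSdef
  have hSfin : S.Finite :=
    (Set.finite_Iio t'.length).subset (fun k hk => hk.2.1)
  have hGS : (↑Good : Set ℕ) ⊆ S := by
    intro k hk
    rw [Finset.coe_sdiff] at hk
    obtain ⟨hkK, hkB⟩ := hk
    have hkK' : k ∈ K := hkK
    have hnb : ¬(k ∈ imgD ∨ t'.getD k 0 ∈ imgR) := by
      intro h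
      exact hkB (Finset.mem_filter.mpr ⟨hkK', h⟩)
    push_neg at hnb
    obtain ⟨hd, hr⟩ := hnb
    obtain ⟨hlen, hlt, hgood⟩ := hKgood k hkK'
    set m : ℕ := t'.getD k 0 with hmdef
    have hdom : ∀ b : ℕ, (k, b) ∈ s → False := by
      intro b hb
      exact hd (Finset.mem_image.mpr ⟨(k, b), hsfin.mem_toFinset.mpr hb, rfl⟩)
    have hran : ∀ a : ℕ, (a, m) ∈ s → False := by
      intro a ha
      exact hr (Finset.mem_image.mpr ⟨(a, m), hsfin.mem_toFinset.mpr ha, rfl⟩)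
    have hpi : PartInj (insert (k, m) s) := by
      constructor
      · intro a b c hab hac
        simp only [Set.mem_insert_iff, Prod.mk.injEq] at hab hac
        rcases hab with ⟨rfl, rfl⟩ | hab
        · rcases hac with ⟨_, rfl⟩ | hac
          · rfl
          · exact absurd hac (hdom c)
        · rcases hac with ⟨rfl, rfl⟩ | hac
          · exact absurd hab (hdom b)
          · exact hsinj.1 hab hac
      · intro a b c hac hbc
        simp only [Set.mem_insert_iff, Prod.mk.injEq] at hac hbc
        rcases hac with ⟨rfl, rfl⟩ | hac
        · rcases hbc with ⟨rfl, _⟩ | hbc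
          · rfl
          · exact absurd hbc (hran b)
        · rcases hbc with ⟨rfl, rfl⟩ | hbc
          · exact absurd hac (hran a)
          · exact hsinj.2 hac hbc
    have hfixeq : ∀ w ∈ E₀, wordFix (insert (k, m) s) w = wordFix s w := by
      intro w hw
      rcases hshape w hw with rfl | ⟨g, hg, hg1, rfl⟩
      · -- w = [x]
        have h1P : (1 : Perm') ∈ P₀ := Set.mem_insert _ _
        have hmk : m ≠ k := by
          have := hgood 1 h1P
          simpa using this
        ext n
        simp only [wordFix, Set.mem_setOf_eq, wordRel, letterRel]
        constructor
        · rintro ⟨c, rfl, hc⟩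
          rcases hc with hc | hc
          · exfalso
            rw [Prod.mk.injEq] at hc
            exact hmk (hc.2.symm.trans hc.1)
          · exact ⟨n, rfl, hc⟩
        · rintro ⟨c, rfl, hc⟩
          exact ⟨n, rfl, Set.mem_insert_of_mem _ hc⟩
      · -- w = [g, x]
        have hgP : g⁻¹ ∈ P₀ := by
          have : extractor [Sum.inl g, Sum.inr true] = g⁻¹ := rfl
          rw [hP₀def]
          exact Set.mem_insert_of_mem _ ⟨_, hw, this⟩
        have hmgk : m ≠ g⁻¹ k := hgood g⁻¹ hgP
        ext n
        simp only [wordFix, Set.mem_setOf_eq, wordRel, letterRel]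
        constructor
        · rintro ⟨c, ⟨d, rfl, hdc⟩, hgc⟩
          rcases hdc with hdc | hdc
          · exfalso
            rw [Prod.mk.injEq] at hdc
            obtain ⟨rfl, rfl⟩ := hdc
            apply hmgk
            rw [← hgc]
            simp
          · exact ⟨c, ⟨n, rfl, hdc⟩, hgc⟩
        · rintro ⟨c, ⟨d, rfl, hdc⟩, hgc⟩
          exact ⟨c, ⟨n, rfl, Set.mem_insert_of_mem _ hdc⟩, hgc⟩
    refine ⟨hlen, hlt, ⟨hsfin.insert _, hpi, hE₀fin, hE₀nice⟩,
      Set.subset_insert _ _, subset_rfl, hfixeq⟩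
  refine ⟨t', ht', hpre, ?_⟩
  have h1 : (↑Good : Set ℕ).ncard ≤ S.ncard := Set.ncard_le_ncard hGS hSfin
  rw [Set.ncard_coe_finset] at h1
  exact lt_of_lt_of_le hGoodcard h1


end
end
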